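/- arXiv:1010.3185 — 2 statements merged into one kernel-verified Lean document; each statement's English description precedes it below -/
import Mathlib

section
/- Let E and F be directed graphs with countable vertex set V. There is a unique isomorphism of Hilbert c₀(V)-bimodules X_E ⊗_{c₀(V)} X_F → X_{E*F} sending χ_e ⊗ χ_f to χ_{(e,f)} for each composable pair (e,f) with s_E(e) = r_F(f). -/
open scoped Classical

structure DirGraph (V : Type) where
  Edge : Type
  r : Edge → V
  s : Edge → V

variable {V : Type}

def DirGraph.fp (E F : DirGraph V) : DirGraph V where
  Edge := {p : E.Edge × F.Edge // E.s p.1 = F.r p.2}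
  r p := E.r p.val.1
  s p := F.s p.val.2

/-- c₀ condition for a function on a (discrete) set. -/
def c0 {α : Type*} [Norm α] (a : V → α) : Prop :=
  ∀ ε > 0, {v | ε ≤ ‖a v‖}.Finite

/-- the fiber of the source map over a vertex -/
def DirGraph.fiber (G : DirGraph V) (v : V) : Type := {e : G.Edge // G.s e = v}

/-- The underlying set of the graph correspondence X_E. -/
def XEset (G : DirGraph V) : Set (G.Edge → ℂ) :=
  {ξ | (∀ v, Summable fun e : G.fiber v => ‖ξ e.val‖ ^ 2) ∧
    c0 fun v => ∑' e : G.fiber v, ‖ξ e.val‖ ^ 2}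

/-- the c₀(V)-valued inner product on X_E -/
noncomputable def innerE (G : DirGraph V) (ξ η : G.Edge → ℂ) : V → ℂ :=
  fun v => ∑' e : G.fiber v, starRingEnd ℂ (ξ e.val) * η e.val

/-- the norm of X_E -/
noncomputable def normE (G : DirGraph V) (ξ : G.Edge → ℂ) : ℝ :=
  ⨆ v : V, Real.sqrt (∑' e : G.fiber v, ‖ξ e.val‖ ^ 2)

/-- characteristic function of an edge -/
noncomputable def chi (G : DirGraph V) (e : G.Edge) : G.Edge → ℂ :=
  fun e' => if e' = e then 1 else 0


lemma chi_mem (G : DirGraph V) (e : G.Edge) : chi G e ∈ XEset G := by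
  have key : ∀ v, ∀ x : G.fiber v, x.val ≠ e → ‖chi G e x.val‖ ^ 2 = 0 := by
    intro v x hx
    simp [chi, hx]
  have hsupp : ∀ v, (Function.support fun x : G.fiber v => ‖chi G e x.val‖ ^ 2).Finite := by
    intro v
    have hsub : (Function.support fun x : G.fiber v => ‖chi G e x.val‖ ^ 2) ⊆
        {x : G.fiber v | x.val = e} := by
      intro x hx
      by_contra h
      exact hx (key v x h)
    have : ({x : G.fiber v | x.val = e}).Subsingleton := by
      intro a ha b hb
      exact Subtype.ext (ha.trans hb.symm)
    exact this.finite.subset hsub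
  have hsum : ∀ v, Summable fun x : G.fiber v => ‖chi G e x.val‖ ^ 2 :=
    fun v => summable_of_finite_support (hsupp v)
  refine ⟨hsum, ?_⟩
  intro ε hε
  have hzero : ∀ v, v ≠ G.s e → (∑' x : G.fiber v, ‖chi G e x.val‖ ^ 2) = 0 := by
    intro v hv
    have : ∀ x : G.fiber v, ‖chi G e x.val‖ ^ 2 = 0 := by
      intro x
      apply key
      intro h
      exact hv (x.property ▸ h ▸ rfl)
    have h0 : (fun x : G.fiber v => ‖chi G e x.val‖ ^ 2) = fun _ => 0 := funext this
    rw [h0, tsum_zero]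
  apply (Set.finite_singleton (G.s e)).subset
  intro v hv
  by_contra h
  have h' : v ≠ G.s e := by simpa using h
  simp only [Set.mem_setOf_eq] at hv
  rw [hzero v h'] at hv
  simp at hv
  linarith

open scoped TensorProduct

/-- The graph correspondence X_E, as a ℂ-submodule of the functions on the edge
set (`XEset G` is a linear subspace, so it coincides with its span). -/
noncomputable def XM {V : Type} (G : DirGraph V) : Submodule ℂ (G.Edge → ℂ) :=
  Submodule.span ℂ (XEset G)

/-- The characteristic function of an edge, as an element of X_E. -/
noncomputable def chiM {V : Type} (G : DirGraph V) (e : G.Edge) : XM G :=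
  ⟨chi G e, Submodule.subset_span (chi_mem G e)⟩

/-- The submodule implementing the balanced tensor product X_E ⊗_{c₀(V)} X_F: the
span of the elements ξ·a ⊗ η - ξ ⊗ a·η for a ∈ c₀(V). -/
noncomputable def balanceN {V : Type} (E F : DirGraph V) :
    Submodule ℂ (XM E ⊗[ℂ] XM F) :=
  Submodule.span ℂ {x | ∃ (ξ : XM E) (η : XM F) (a : V → ℂ), c0 a ∧
    ∃ (ξa : XM E) (aη : XM F),
      (ξa : E.Edge → ℂ) = (fun e => (ξ : E.Edge → ℂ) e * a (E.s e)) ∧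
      (aη : F.Edge → ℂ) = (fun f => a (F.r f) * (η : F.Edge → ℂ) f) ∧
      x = ξa ⊗ₜ[ℂ] η - ξ ⊗ₜ[ℂ] aη}

/-- The canonical linear map X_E ⊗ X_F → (functions on the edges of E*F),
sending ξ ⊗ η to (e,f) ↦ ξ(e)η(f); it induces the tensor seminorm. -/
noncomputable def toFn {V : Type} (E F : DirGraph V) :
    (XM E ⊗[ℂ] XM F) →ₗ[ℂ] ((E.fp F).Edge → ℂ) :=
  TensorProduct.lift (LinearMap.mk₂ ℂ
    (fun ξ η => fun p => (ξ : E.Edge → ℂ) p.val.1 * (η : F.Edge → ℂ) p.val.2)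
    (by intro ξ ξ' η; funext p; simp [add_mul])
    (by intro c ξ η; funext p; simp [smul_eq_mul]; ring)
    (by intro ξ η η'; funext p; simp [mul_add])
    (by intro c ξ η; funext p; simp [smul_eq_mul]; ring))
section Helpers

lemma sq_norm_nonneg' (x : ℂ) : (0:ℝ) ≤ ‖x‖ ^ 2 := by positivity

lemma tsum_fiber_nonneg (G : DirGraph V) (ξ : G.Edge → ℂ) (v : V) :
    0 ≤ ∑' e : G.fiber v, ‖ξ e.val‖ ^ 2 :=
  tsum_nonneg fun _ => sq_norm_nonneg' _

noncomputable def XEsub (G : DirGraph V) : Submodule ℂ (G.Edge → ℂ) where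
  carrier := XEset G
  zero_mem' := by
    refine ⟨fun v => ?_, fun ε hε => ?_⟩
    · simpa using summable_zero
    · apply Set.finite_empty.subset
      intro v hv
      simp only [Set.mem_setOf_eq, Pi.zero_apply, norm_zero] at hv
      rw [show ((0:ℝ)^2) = 0 by ring] at hv
      simp only [tsum_zero, norm_zero] at hv
      exact absurd (lt_of_lt_of_le hε hv) (lt_irrefl 0)
  add_mem' := by
    rintro ξ η ⟨hξs, hξ0⟩ ⟨hηs, hη0⟩
    have hbound : ∀ v (e : _root_.DirGraph.fiber _ v),
        ‖(ξ + η) e.val‖ ^ 2 ≤ 2 * ‖ξ e.val‖ ^ 2 + 2 * ‖η e.val‖ ^ 2 := by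
      intro v e
      have h1 : ‖(ξ + η) e.val‖ ≤ ‖ξ e.val‖ + ‖η e.val‖ := norm_add_le _ _
      have h2 : ‖(ξ + η) e.val‖ ^ 2 ≤ (‖ξ e.val‖ + ‖η e.val‖) ^ 2 :=
        pow_le_pow_left₀ (norm_nonneg _) h1 2
      nlinarith [sq_nonneg (‖ξ e.val‖ - ‖η e.val‖)]
    have hsum : ∀ v, Summable fun e : _root_.DirGraph.fiber _ v => ‖(ξ + η) e.val‖ ^ 2 := by
      intro v
      exact Summable.of_nonneg_of_le (fun e => sq_norm_nonneg' _) (hbound v)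
        (((hξs v).mul_left 2).add ((hηs v).mul_left 2))
    refine ⟨hsum, fun ε hε => ?_⟩
    have key : ∀ v, (∑' e : _root_.DirGraph.fiber _ v, ‖(ξ + η) e.val‖ ^ 2) ≤
        2 * (∑' e : _root_.DirGraph.fiber _ v, ‖ξ e.val‖ ^ 2) +
        2 * (∑' e : _root_.DirGraph.fiber _ v, ‖η e.val‖ ^ 2) := by
      intro v
      calc (∑' e : _root_.DirGraph.fiber _ v, ‖(ξ + η) e.val‖ ^ 2)
          ≤ ∑' e : _root_.DirGraph.fiber _ v, (2 * ‖ξ e.val‖ ^ 2 + 2 * ‖η e.val‖ ^ 2) :=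
            Summable.tsum_le_tsum (hbound v) (hsum v) (((hξs v).mul_left 2).add ((hηs v).mul_left 2))
        _ = _ := by
            rw [Summable.tsum_add ((hξs v).mul_left 2) ((hηs v).mul_left 2), tsum_mul_left, tsum_mul_left]
    apply Set.Finite.subset ((hξ0 (ε/4) (by linarith)).union (hη0 (ε/4) (by linarith)))
    intro v hv
    simp only [Set.mem_setOf_eq] at hv ⊢
    by_contra hcon
    simp only [Set.mem_union, Set.mem_setOf_eq, not_or, not_le] at hcon
    have n1 := tsum_fiber_nonneg _ ξ v
    have n2 := tsum_fiber_nonneg _ η v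
    have n3 := tsum_fiber_nonneg _ (ξ + η) v
    rw [Real.norm_of_nonneg n3] at hv
    rw [Real.norm_of_nonneg n1] at hcon
    rw [Real.norm_of_nonneg n2] at hcon
    have := key v
    rcases hcon with ⟨h1, h2⟩
    linarith
  smul_mem' := by
    rintro c ξ ⟨hs, h0⟩
    have heq : ∀ v (e : _root_.DirGraph.fiber _ v),
        ‖(c • ξ) e.val‖ ^ 2 = ‖c‖ ^ 2 * ‖ξ e.val‖ ^ 2 := by
      intro v e
      simp [norm_smul, mul_pow]
    have hsum : ∀ v, Summable fun e : _root_.DirGraph.fiber _ v => ‖(c • ξ) e.val‖ ^ 2 := by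
      intro v
      simp only [heq v]
      exact (hs v).mul_left _
    refine ⟨hsum, fun ε hε => ?_⟩
    apply Set.Finite.subset (h0 (ε / (‖c‖^2 + 1)) (by positivity))
    intro v hv
    simp only [Set.mem_setOf_eq] at hv ⊢
    have hteq : (∑' e : _root_.DirGraph.fiber _ v, ‖(c • ξ) e.val‖ ^ 2) =
        ‖c‖ ^ 2 * ∑' e : _root_.DirGraph.fiber _ v, ‖ξ e.val‖ ^ 2 := by
      simp only [heq v]; exact tsum_mul_left
    have n1 := tsum_fiber_nonneg _ ξ v
    have n3 := tsum_fiber_nonneg _ (c • ξ) v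
    rw [Real.norm_of_nonneg n3, hteq] at hv
    rw [Real.norm_of_nonneg n1]
    set S := (∑' e : _root_.DirGraph.fiber _ v, ‖ξ e.val‖ ^ 2) with hSdef
    rw [div_le_iff₀ (by positivity)]
    nlinarith [hv, n1]

lemma XM_eq (G : DirGraph V) : XM G = XEsub G := by
  apply le_antisymm
  · exact Submodule.span_le.mpr (fun x hx => hx)
  · exact fun x hx => Submodule.subset_span hx

lemma mem_XEset {G : DirGraph V} (ξ : XM G) : (ξ : G.Edge → ℂ) ∈ XEset G := by
  have h : (ξ : G.Edge → ℂ) ∈ XEsub G := by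
    rw [← XM_eq G]; exact ξ.2
  exact h

end Helpers
section Helpers2
variable {V : Type}

lemma bound_of_XEset {G : DirGraph V} {ξ : G.Edge → ℂ} (h : ξ ∈ XEset G) :
    ∃ M : ℝ, 1 ≤ M ∧ ∀ w, (∑' e : G.fiber w, ‖ξ e.val‖ ^ 2) ≤ M := by
  obtain ⟨hs, h0⟩ := h
  have hT := h0 1 one_pos
  have hnn : 0 ≤ ∑ w ∈ hT.toFinset, (∑' e : G.fiber w, ‖ξ e.val‖ ^ 2) :=
    Finset.sum_nonneg fun w _ => tsum_fiber_nonneg G ξ w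
  refine ⟨1 + ∑ w ∈ hT.toFinset, (∑' e : G.fiber w, ‖ξ e.val‖ ^ 2), by linarith, fun w => ?_⟩
  by_cases hw : 1 ≤ ‖∑' e : G.fiber w, ‖ξ e.val‖ ^ 2‖
  · have hmem : w ∈ hT.toFinset := hT.mem_toFinset.mpr hw
    have := Finset.single_le_sum (f := fun w => (∑' e : G.fiber w, ‖ξ e.val‖ ^ 2))
      (fun i _ => tsum_fiber_nonneg G ξ i) hmem
    linarith
  · push_neg at hw
    rw [Real.norm_of_nonneg (tsum_fiber_nonneg G ξ w)] at hw
    linarith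

lemma mix_summable {G : DirGraph V} {ξ ξ' : G.Edge → ℂ} (h : ξ ∈ XEset G)
    (h' : ξ' ∈ XEset G) (w : V) :
    Summable fun e : G.fiber w => ‖ξ e.val‖ * ‖ξ' e.val‖ :=
  Summable.of_nonneg_of_le (fun e => mul_nonneg (norm_nonneg _) (norm_nonneg _))
    (fun e => by nlinarith [sq_nonneg (‖ξ e.val‖ - ‖ξ' e.val‖), norm_nonneg (ξ e.val),
      norm_nonneg (ξ' e.val)])
    ((h.1 w).add (h'.1 w))

lemma mix_bound {G : DirGraph V} {ξ ξ' : G.Edge → ℂ} (h : ξ ∈ XEset G) (h' : ξ' ∈ XEset G) :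
    ∃ M : ℝ, 0 ≤ M ∧ ∀ w, (∑' e : G.fiber w, ‖ξ e.val‖ * ‖ξ' e.val‖) ≤ M := by
  obtain ⟨M, hM1, hM⟩ := bound_of_XEset h
  obtain ⟨M', hM'1, hM'⟩ := bound_of_XEset h'
  refine ⟨M + M', by linarith, fun w => ?_⟩
  have step : (∑' e : G.fiber w, ‖ξ e.val‖ * ‖ξ' e.val‖) ≤
      ∑' e : G.fiber w, (‖ξ e.val‖ ^ 2 + ‖ξ' e.val‖ ^ 2) :=
    Summable.tsum_le_tsum
      (fun e => by nlinarith [sq_nonneg (‖ξ e.val‖ - ‖ξ' e.val‖), norm_nonneg (ξ e.val),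
        norm_nonneg (ξ' e.val)])
      (mix_summable h h' w) ((h.1 w).add (h'.1 w))
  rw [Summable.tsum_add (h.1 w) (h'.1 w)] at step
  have := hM w
  have := hM' w
  linarith

lemma tsum_chi_mul {G : DirGraph V} (f : G.Edge) (A : G.fiber (G.s f) → ℂ) :
    (∑' x : G.fiber (G.s f), starRingEnd ℂ (chi G f x.val) * A x) = A ⟨f, rfl⟩ := by
  refine (tsum_eq_single (L := SummationFilter.unconditional _) (⟨f, rfl⟩ : G.fiber (G.s f)) ?_).trans ?_
  · intro x hx
    have hne : x.val ≠ f := fun hh => hx (Subtype.ext hh)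
    simp [chi, hne]
  · simp [chi]

def fpFiberEquiv (E F : DirGraph V) (v : V) :
    (E.fp F).fiber v ≃ Σ f : F.fiber v, E.fiber (F.r f.val) where
  toFun p := ⟨⟨p.val.val.2, p.prop⟩, ⟨p.val.val.1, p.val.prop⟩⟩
  invFun q := ⟨⟨(q.2.val, q.1.val), q.2.prop⟩, q.1.prop⟩
  left_inv p := rfl
  right_inv q := rfl

lemma toFn_tmul (E F : DirGraph V) (ξ : XM E) (η : XM F) :
    toFn E F (ξ ⊗ₜ[ℂ] η) = fun p : (E.fp F).Edge =>
      (ξ : E.Edge → ℂ) p.val.1 * (η : F.Edge → ℂ) p.val.2 := rfl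

end Helpers2
section Helpers3
set_option maxHeartbeats 2000000
variable {V : Type}

lemma key_summable {E F : DirGraph V} {ξ ξ' : E.Edge → ℂ} {η η' : F.Edge → ℂ}
    (hξ : ξ ∈ XEset E) (hξ' : ξ' ∈ XEset E) (hη : η ∈ XEset F) (hη' : η' ∈ XEset F) (v : V) :
    Summable fun q : Σ f : F.fiber v, E.fiber (F.r f.val) =>
      (‖η q.1.val‖ * ‖η' q.1.val‖) * (‖ξ q.2.val‖ * ‖ξ' q.2.val‖) := by
  obtain ⟨M, hM0, hM⟩ := mix_bound hξ hξ'
  apply (summable_sigma_of_nonneg ?_).mpr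
  constructor
  · intro f
    exact ((mix_summable hξ hξ' (F.r f.val)).mul_left
      (‖η f.val‖ * ‖η' f.val‖)).congr (fun e => by ring)
  · have hre : (fun f : F.fiber v => ∑' e : E.fiber (F.r f.val),
        (‖η f.val‖ * ‖η' f.val‖) * (‖ξ e.val‖ * ‖ξ' e.val‖)) =
        fun f : F.fiber v => (‖η f.val‖ * ‖η' f.val‖) *
          ∑' e : E.fiber (F.r f.val), ‖ξ e.val‖ * ‖ξ' e.val‖ := by
      funext f
      exact tsum_mul_left
    rw [hre]
    apply Summable.of_nonneg_of_le (fun f => ?_) (fun f => ?_)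
      ((mix_summable hη hη' v).mul_right M)
    · exact mul_nonneg (mul_nonneg (norm_nonneg _) (norm_nonneg _))
        (tsum_nonneg fun e => mul_nonneg (norm_nonneg _) (norm_nonneg _))
    · exact mul_le_mul_of_nonneg_left (hM _)
        (mul_nonneg (norm_nonneg _) (norm_nonneg _))
  · intro q
    exact mul_nonneg (mul_nonneg (norm_nonneg _) (norm_nonneg _))
      (mul_nonneg (norm_nonneg _) (norm_nonneg _))

lemma key_tsum {E F : DirGraph V} {ξ ξ' : E.Edge → ℂ} {η η' : F.Edge → ℂ}
    (hξ : ξ ∈ XEset E) (hξ' : ξ' ∈ XEset E) (hη : η ∈ XEset F) (hη' : η' ∈ XEset F) (v : V) :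
    (∑' p : (E.fp F).fiber v,
        starRingEnd ℂ (ξ p.val.val.1 * η p.val.val.2) * (ξ' p.val.val.1 * η' p.val.val.2)) =
      ∑' f : F.fiber v,
        starRingEnd ℂ (η f.val) * innerE E ξ ξ' (F.r f.val) * η' f.val := by
  set u : (Σ f : F.fiber v, E.fiber (F.r f.val)) → ℂ := fun q =>
    (starRingEnd ℂ (η q.1.val) * η' q.1.val) * (starRingEnd ℂ (ξ q.2.val) * ξ' q.2.val) with hu
  have husum : Summable u := by
    apply Summable.of_norm
    have heq : (fun q => ‖u q‖) = fun q : Σ f : F.fiber v, E.fiber (F.r f.val) =>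
        (‖η q.1.val‖ * ‖η' q.1.val‖) * (‖ξ q.2.val‖ * ‖ξ' q.2.val‖) := by
      funext q
      simp [hu, norm_mul, RCLike.norm_conj]
    rw [heq]
    exact key_summable hξ hξ' hη hη' v
  calc (∑' p : (E.fp F).fiber v,
        starRingEnd ℂ (ξ p.val.val.1 * η p.val.val.2) * (ξ' p.val.val.1 * η' p.val.val.2))
      = ∑' q : Σ f : F.fiber v, E.fiber (F.r f.val), u q := by
        rw [← Equiv.tsum_eq (fpFiberEquiv E F v).symm
          (fun p : (E.fp F).fiber v =>
            starRingEnd ℂ (ξ p.val.val.1 * η p.val.val.2) * (ξ' p.val.val.1 * η' p.val.val.2))]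
        apply tsum_congr
        intro q
        show starRingEnd ℂ (ξ q.2.val * η q.1.val) * (ξ' q.2.val * η' q.1.val) = u q
        simp only [fpFiberEquiv, Equiv.coe_fn_symm_mk, hu, map_mul]
        ring
    _ = ∑' f : F.fiber v, ∑' e : E.fiber (F.r f.val), u ⟨f, e⟩ := by
        exact Summable.tsum_sigma' (fun b => husum.sigma_factor b) husum
    _ = _ := by
        apply tsum_congr
        intro f
        rw [show (fun e : E.fiber (F.r f.val) => u ⟨f, e⟩) = fun e =>
          (starRingEnd ℂ (η f.val) * η' f.val) * (starRingEnd ℂ (ξ e.val) * ξ' e.val) from rfl]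
        rw [tsum_mul_left]
        simp only [innerE]
        ring

lemma key_mem {E F : DirGraph V} {ξ : E.Edge → ℂ} {η : F.Edge → ℂ}
    (hξ : ξ ∈ XEset E) (hη : η ∈ XEset F) :
    (fun p : (E.fp F).Edge => ξ p.val.1 * η p.val.2) ∈ XEset (E.fp F) := by
  obtain ⟨M, hM1, hM⟩ := bound_of_XEset hξ
  have hnormeq : ∀ v, (fun p : (E.fp F).fiber v => ‖ξ p.val.val.1 * η p.val.val.2‖ ^ 2) =
      (fun q : Σ f : F.fiber v, E.fiber (F.r f.val) =>
        (‖η q.1.val‖ * ‖η q.1.val‖) * (‖ξ q.2.val‖ * ‖ξ q.2.val‖)) ∘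
        (fpFiberEquiv E F v) := by
    intro v
    funext p
    simp only [Function.comp_apply, fpFiberEquiv, Equiv.coe_fn_mk, norm_mul]
    show _ = (‖η p.val.val.2‖ * ‖η p.val.val.2‖) * (‖ξ p.val.val.1‖ * ‖ξ p.val.val.1‖)
    ring
  have hsum : ∀ v, Summable fun p : (E.fp F).fiber v => ‖ξ p.val.val.1 * η p.val.val.2‖ ^ 2 := by
    intro v
    rw [hnormeq v]
    exact ((fpFiberEquiv E F v).summable_iff.mpr (key_summable hξ hξ hη hη v)).congr
      (fun p => rfl)
  refine ⟨hsum, ?_⟩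
  have hbound : ∀ v, (∑' p : (E.fp F).fiber v, ‖ξ p.val.val.1 * η p.val.val.2‖ ^ 2) ≤
      M * ∑' f : F.fiber v, ‖η f.val‖ ^ 2 := by
    intro v
    have h1 : (∑' p : (E.fp F).fiber v, ‖ξ p.val.val.1 * η p.val.val.2‖ ^ 2) =
        ∑' q : Σ f : F.fiber v, E.fiber (F.r f.val),
          (‖η q.1.val‖ * ‖η q.1.val‖) * (‖ξ q.2.val‖ * ‖ξ q.2.val‖) := by
      rw [hnormeq v]
      have heq := Equiv.tsum_eq (fpFiberEquiv E F v)
        (fun q : Σ f : F.fiber v, E.fiber (F.r f.val) =>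
          (‖η q.1.val‖ * ‖η q.1.val‖) * (‖ξ q.2.val‖ * ‖ξ q.2.val‖))
      exact heq
    rw [h1, Summable.tsum_sigma' (fun b => (key_summable hξ hξ hη hη v).sigma_factor b)
      (key_summable hξ hξ hη hη v)]
    have h2 : ∀ f : F.fiber v,
        (∑' e : E.fiber (F.r f.val), (‖η f.val‖ * ‖η f.val‖) * (‖ξ e.val‖ * ‖ξ e.val‖)) =
        (‖η f.val‖ * ‖η f.val‖) * ∑' e : E.fiber (F.r f.val), ‖ξ e.val‖ * ‖ξ e.val‖ :=
      fun f => tsum_mul_left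
    calc (∑' (f : F.fiber v) (e : E.fiber (F.r f.val)),
            (‖η f.val‖ * ‖η f.val‖) * (‖ξ e.val‖ * ‖ξ e.val‖))
        ≤ ∑' f : F.fiber v, ‖η f.val‖ ^ 2 * M := by
          apply Summable.tsum_le_tsum _ _ ((hη.1 v).mul_right M)
          · intro f
            rw [h2 f]
            have hle : (∑' e : E.fiber (F.r f.val), ‖ξ e.val‖ * ‖ξ e.val‖) ≤ M := by
              have := hM (F.r f.val)
              calc (∑' e : E.fiber (F.r f.val), ‖ξ e.val‖ * ‖ξ e.val‖)
                  = ∑' e : E.fiber (F.r f.val), ‖ξ e.val‖ ^ 2 := by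
                    apply tsum_congr; intro e; ring
                _ ≤ M := this
            calc (‖η f.val‖ * ‖η f.val‖) * ∑' e : E.fiber (F.r f.val), ‖ξ e.val‖ * ‖ξ e.val‖
                ≤ (‖η f.val‖ * ‖η f.val‖) * M :=
                  mul_le_mul_of_nonneg_left hle (mul_nonneg (norm_nonneg _) (norm_nonneg _))
              _ = ‖η f.val‖ ^ 2 * M := by ring
          · apply Summable.of_nonneg_of_le (fun f => ?_) (fun f => ?_) ((hη.1 v).mul_right M)
            · rw [h2 f]
              exact mul_nonneg (mul_nonneg (norm_nonneg _) (norm_nonneg _))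
                (tsum_nonneg fun e => mul_nonneg (norm_nonneg _) (norm_nonneg _))
            · rw [h2 f]
              have hle : (∑' e : E.fiber (F.r f.val), ‖ξ e.val‖ * ‖ξ e.val‖) ≤ M := by
                have := hM (F.r f.val)
                calc (∑' e : E.fiber (F.r f.val), ‖ξ e.val‖ * ‖ξ e.val‖)
                    = ∑' e : E.fiber (F.r f.val), ‖ξ e.val‖ ^ 2 := by
                      apply tsum_congr; intro e; ring
                  _ ≤ M := this
              calc (‖η f.val‖ * ‖η f.val‖) * ∑' e : E.fiber (F.r f.val), ‖ξ e.val‖ * ‖ξ e.val‖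
                  ≤ (‖η f.val‖ * ‖η f.val‖) * M :=
                    mul_le_mul_of_nonneg_left hle (mul_nonneg (norm_nonneg _) (norm_nonneg _))
                _ = ‖η f.val‖ ^ 2 * M := by ring
      _ = M * ∑' f : F.fiber v, ‖η f.val‖ ^ 2 := by
          rw [tsum_mul_right, mul_comm]
  intro ε hε
  apply Set.Finite.subset (hη.2 (ε / M) (by positivity))
  intro v hv
  simp only [Set.mem_setOf_eq] at hv ⊢
  have n1 : (0:ℝ) ≤ ∑' p : (E.fp F).fiber v, ‖ξ p.val.val.1 * η p.val.val.2‖ ^ 2 :=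
    tsum_nonneg fun _ => sq_norm_nonneg' _
  have n2 : (0:ℝ) ≤ ∑' f : F.fiber v, ‖η f.val‖ ^ 2 := tsum_fiber_nonneg F η v
  rw [Real.norm_of_nonneg n1] at hv
  rw [Real.norm_of_nonneg n2]
  have := hbound v
  rw [div_le_iff₀ (by linarith : (0:ℝ) < M)]
  nlinarith

end Helpers3
section Phi
set_option maxHeartbeats 2000000
set_option synthInstance.maxHeartbeats 1000000
set_option maxSynthPendingDepth 3
variable {V : Type}

lemma toFn_mem (E F : DirGraph V) (x : XM E ⊗[ℂ] XM F) : toFn E F x ∈ XM (E.fp F) := by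
  induction x using TensorProduct.induction_on with
  | zero => rw [map_zero]; exact (XM (E.fp F)).zero_mem
  | tmul ξ η =>
      rw [toFn_tmul, XM_eq]
      exact key_mem (mem_XEset ξ) (mem_XEset η)
  | add x y hx hy => rw [map_add]; exact (XM (E.fp F)).add_mem hx hy

noncomputable def Phi0 (E F : DirGraph V) : (XM E ⊗[ℂ] XM F) →ₗ[ℂ] XM (E.fp F) :=
  (toFn E F).codRestrict (XM (E.fp F)) (toFn_mem E F)

lemma Phi0_coe (E F : DirGraph V) (x : XM E ⊗[ℂ] XM F) :
    (Phi0 E F x : (E.fp F).Edge → ℂ) = toFn E F x := rfl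

lemma balance_le_ker (E F : DirGraph V) : balanceN E F ≤ LinearMap.ker (Phi0 E F) := by
  rw [balanceN, Submodule.span_le]
  rintro x ⟨ξ, η, a, ha, ξa, aη, hξa, haη, rfl⟩
  simp only [SetLike.mem_coe, LinearMap.mem_ker]
  apply Subtype.ext
  rw [Phi0_coe]
  show toFn E F _ = (0 : (E.fp F).Edge → ℂ)
  rw [map_sub]
  funext p
  simp only [Pi.sub_apply, Pi.zero_apply, toFn_tmul]
  simp only [hξa, haη]
  rw [p.prop]
  ring

noncomputable def PhiMap (E F : DirGraph V) :
    ((XM E ⊗[ℂ] XM F) ⧸ balanceN E F) →ₗ[ℂ] XM (E.fp F) :=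
  Submodule.liftQ _ (Phi0 E F) (balance_le_ker E F)

lemma PhiMap_mk (E F : DirGraph V) (x : XM E ⊗[ℂ] XM F) :
    (PhiMap E F (Submodule.Quotient.mk x) : (E.fp F).Edge → ℂ) = toFn E F x := rfl

lemma toFn_chiM (E F : DirGraph V) (p : (E.fp F).Edge) :
    toFn E F (chiM E p.val.1 ⊗ₜ[ℂ] chiM F p.val.2) = chi (E.fp F) p := by
  funext x
  show chi E p.val.1 x.val.1 * chi F p.val.2 x.val.2 = chi (E.fp F) p x
  by_cases hx : x = p
  · subst hx; simp [chi]
  · have hne : x.val.1 ≠ p.val.1 ∨ x.val.2 ≠ p.val.2 := by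
      by_contra hc
      push_neg at hc
      exact hx (Subtype.ext (Prod.ext hc.1 hc.2))
    rcases hne with h | h <;> simp [chi, h, hx]

end Phi

set_option maxSynthPendingDepth 3
set_option synthInstance.maxHeartbeats 1000000

/-- There is a unique isomorphism of Hilbert c₀(V)-bimodules
X_E ⊗_{c₀(V)} X_F → X_{E*F} sending χ_e ⊗ χ_f to χ_{(e,f)} for composable (e,f):
formally, there is a unique linear map Φ on the balanced tensor product
(the quotient by the balancing submodule) which sends the classes of the
χ_e ⊗ χ_f to χ_{(e,f)}, preserves the c₀(V)-valued inner products of (classes of)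
elementary tensors, intertwines the left and right c₀(V)-actions on elementary
tensors, and has dense range. -/
theorem stmt10 {V : Type} [Countable V] (E F : DirGraph V) :
    ∃! Φ : ((XM E ⊗[ℂ] XM F) ⧸ balanceN E F) →ₗ[ℂ] XM (E.fp F),
      (∀ (e : E.Edge) (f : F.Edge) (h : E.s e = F.r f),
        Φ (Submodule.Quotient.mk (chiM E e ⊗ₜ[ℂ] chiM F f)) =
          chiM (E.fp F) ⟨(e, f), h⟩) ∧
      (∀ (ξ ξ' : XM E) (η η' : XM F),
        innerE (E.fp F) (Φ (Submodule.Quotient.mk (ξ ⊗ₜ[ℂ] η)) : (E.fp F).Edge → ℂ)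
            (Φ (Submodule.Quotient.mk (ξ' ⊗ₜ[ℂ] η')) : (E.fp F).Edge → ℂ) =
          fun v => ∑' f : F.fiber v,
            starRingEnd ℂ ((η : F.Edge → ℂ) f.val) *
              innerE E (ξ : E.Edge → ℂ) (ξ' : E.Edge → ℂ) (F.r f.val) *
              (η' : F.Edge → ℂ) f.val) ∧
      (∀ (a : V → ℂ), c0 a → ∀ (ξ ξa : XM E) (η : XM F),
        ((ξa : E.Edge → ℂ) = fun e => a (E.r e) * (ξ : E.Edge → ℂ) e) →
        (Φ (Submodule.Quotient.mk (ξa ⊗ₜ[ℂ] η)) : (E.fp F).Edge → ℂ) =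
          fun p => a ((E.fp F).r p) *
            (Φ (Submodule.Quotient.mk (ξ ⊗ₜ[ℂ] η)) : (E.fp F).Edge → ℂ) p) ∧
      (∀ (a : V → ℂ), c0 a → ∀ (ξ : XM E) (η ηa : XM F),
        ((ηa : F.Edge → ℂ) = fun f => (η : F.Edge → ℂ) f * a (F.s f)) →
        (Φ (Submodule.Quotient.mk (ξ ⊗ₜ[ℂ] ηa)) : (E.fp F).Edge → ℂ) =
          fun p =>
            (Φ (Submodule.Quotient.mk (ξ ⊗ₜ[ℂ] η)) : (E.fp F).Edge → ℂ) p *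
              a ((E.fp F).s p)) ∧
      (∀ ζ : XM (E.fp F), ∀ ε > 0, ∃ q,
        normE (E.fp F) ((ζ : (E.fp F).Edge → ℂ) - (Φ q : (E.fp F).Edge → ℂ)) < ε) := by
  classical
  refine ⟨PhiMap E F, ⟨?_, ?_, ?_, ?_, ?_⟩, ?_⟩
  · -- chi condition
    intro e f h
    apply Subtype.ext
    rw [PhiMap_mk]
    exact toFn_chiM E F ⟨(e, f), h⟩
  · -- inner product condition
    intro ξ ξ' η η'
    funext v
    rw [PhiMap_mk, PhiMap_mk]
    simp only [innerE, toFn_tmul]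
    exact key_tsum (mem_XEset ξ) (mem_XEset ξ') (mem_XEset η) (mem_XEset η') v
  · -- left action
    intro a ha ξ ξa η hξa
    rw [PhiMap_mk, PhiMap_mk]
    funext p
    simp only [toFn_tmul]
    simp only [hξa]
    show a (E.r p.val.1) * (ξ : E.Edge → ℂ) p.val.1 * (η : F.Edge → ℂ) p.val.2 =
      a (E.r p.val.1) * ((ξ : E.Edge → ℂ) p.val.1 * (η : F.Edge → ℂ) p.val.2)
    ring
  · -- right action
    intro a ha ξ η ηa hηa
    rw [PhiMap_mk, PhiMap_mk]
    funext p
    simp only [toFn_tmul]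
    simp only [hηa]
    show (ξ : E.Edge → ℂ) p.val.1 * ((η : F.Edge → ℂ) p.val.2 * a (F.s p.val.2)) =
      (ξ : E.Edge → ℂ) p.val.1 * (η : F.Edge → ℂ) p.val.2 * a (F.s p.val.2)
    ring
  · -- density
    intro ζ ε hε
    obtain ⟨hsumζ, hc0ζ⟩ := mem_XEset ζ
    have hδpos : (0:ℝ) < ε / 2 := by linarith
    have hδ2 : (0:ℝ) < (ε / 2) ^ 2 := by positivity
    have hchoice : ∀ v : V, ∃ t : Finset ((E.fp F).fiber v),
        (∑' x : ((t : Set ((E.fp F).fiber v))ᶜ : Set ((E.fp F).fiber v)),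
          ‖(ζ : (E.fp F).Edge → ℂ) (x : (E.fp F).fiber v).val‖ ^ 2) < (ε / 2) ^ 2 := by
      intro v
      have hs := hsumζ v
      obtain ⟨t, ht⟩ := (hs.hasSum.eventually (Ioi_mem_nhds
        (show (∑' x : (E.fp F).fiber v, ‖(ζ : (E.fp F).Edge → ℂ) x.val‖ ^ 2) - (ε/2)^2 <
          ∑' x : (E.fp F).fiber v, ‖(ζ : (E.fp F).Edge → ℂ) x.val‖ ^ 2 by linarith))).exists
      refine ⟨t, ?_⟩
      have hsplit := Summable.sum_add_tsum_compl (s := t) hs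
      simp only [Set.mem_Ioi] at ht
      linarith
    choose t ht using hchoice
    set T : Finset V := (hc0ζ ((ε / 2) ^ 2) hδ2).toFinset with hT
    set F0 : Finset ((E.fp F).Edge) := T.biUnion (fun v => (t v).image Subtype.val) with hF0
    refine ⟨Submodule.Quotient.mk (∑ p ∈ F0,
      (ζ : (E.fp F).Edge → ℂ) p • (chiM E p.val.1 ⊗ₜ[ℂ] chiM F p.val.2)), ?_⟩
    have hcoe : (PhiMap E F (Submodule.Quotient.mk (∑ p ∈ F0,
        (ζ : (E.fp F).Edge → ℂ) p • (chiM E p.val.1 ⊗ₜ[ℂ] chiM F p.val.2)))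
          : (E.fp F).Edge → ℂ) =
        fun x => if x ∈ F0 then (ζ : (E.fp F).Edge → ℂ) x else 0 := by
      rw [PhiMap_mk, map_sum]
      funext x
      rw [Finset.sum_apply]
      have hterm : ∀ p ∈ F0, (toFn E F ((ζ : (E.fp F).Edge → ℂ) p •
          (chiM E p.val.1 ⊗ₜ[ℂ] chiM F p.val.2))) x =
          if x = p then (ζ : (E.fp F).Edge → ℂ) p else 0 := by
        intro p _
        rw [map_smul, toFn_chiM E F p]
        simp [chi, smul_eq_mul]
      rw [Finset.sum_congr rfl hterm]
      simp
    rw [hcoe]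
    have hpt : ∀ x : (E.fp F).Edge,
        ((ζ : (E.fp F).Edge → ℂ) - fun x => if x ∈ F0 then (ζ : (E.fp F).Edge → ℂ) x else 0) x =
          if x ∈ F0 then 0 else (ζ : (E.fp F).Edge → ℂ) x := by
      intro x
      by_cases hx : x ∈ F0 <;> simp [hx]
    have hptn : ∀ (v : V) (x : (E.fp F).fiber v),
        ‖((ζ : (E.fp F).Edge → ℂ) - fun x => if x ∈ F0 then (ζ : (E.fp F).Edge → ℂ) x else 0)
            x.val‖ ^ 2 =
          if x.val ∈ F0 then 0 else ‖(ζ : (E.fp F).Edge → ℂ) x.val‖ ^ 2 := by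
      intro v x
      rw [hpt x.val]
      by_cases hx : x.val ∈ F0 <;> simp [hx]
    have hDsum : ∀ v : V, Summable fun x : (E.fp F).fiber v =>
        ‖((ζ : (E.fp F).Edge → ℂ) - fun x => if x ∈ F0 then (ζ : (E.fp F).Edge → ℂ) x else 0)
          x.val‖ ^ 2 := by
      intro v
      apply Summable.of_nonneg_of_le (fun x => sq_norm_nonneg' _) (fun x => ?_) (hsumζ v)
      rw [hptn v x]
      by_cases hx : x.val ∈ F0 <;> simp [hx, sq_norm_nonneg']
    have hbV : ∀ v : V, (∑' x : (E.fp F).fiber v,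
        ‖((ζ : (E.fp F).Edge → ℂ) - fun x => if x ∈ F0 then (ζ : (E.fp F).Edge → ℂ) x else 0)
          x.val‖ ^ 2) ≤ (ε / 2) ^ 2 := by
      intro v
      by_cases hv : v ∈ T
      · -- tail estimate
        have hvan : ∀ x ∈ t v,
            ‖((ζ : (E.fp F).Edge → ℂ) - fun x => if x ∈ F0 then (ζ : (E.fp F).Edge → ℂ) x
              else 0) x.val‖ ^ 2 = 0 := by
          intro x hx
          rw [hptn v x, if_pos]
          rw [hF0]
          exact Finset.mem_biUnion.mpr ⟨v, hv, Finset.mem_image.mpr ⟨x, hx, rfl⟩⟩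
        have hsplit := Summable.sum_add_tsum_compl (s := t v) (hDsum v)
        have hzero : (∑ x ∈ t v,
            ‖((ζ : (E.fp F).Edge → ℂ) - fun x => if x ∈ F0 then (ζ : (E.fp F).Edge → ℂ) x
              else 0) x.val‖ ^ 2) = 0 := Finset.sum_eq_zero hvan
        have hcompl_le : (∑' x : ((t v : Set ((E.fp F).fiber v))ᶜ : Set ((E.fp F).fiber v)),
            ‖((ζ : (E.fp F).Edge → ℂ) - fun x => if x ∈ F0 then (ζ : (E.fp F).Edge → ℂ) x
              else 0) (x : (E.fp F).fiber v).val‖ ^ 2) ≤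
            ∑' x : ((t v : Set ((E.fp F).fiber v))ᶜ : Set ((E.fp F).fiber v)),
              ‖(ζ : (E.fp F).Edge → ℂ) (x : (E.fp F).fiber v).val‖ ^ 2 := by
          apply Summable.tsum_le_tsum _ ((hDsum v).subtype _) ((hsumζ v).subtype _)
          intro x
          simp only [Function.comp_apply]
          rw [hptn v x.val]
          by_cases hx : (x : (E.fp F).fiber v).val ∈ F0 <;> simp [hx, sq_norm_nonneg']
        have := ht v
        linarith
      · -- small vertex
        have hsmall : ‖∑' x : (E.fp F).fiber v, ‖(ζ : (E.fp F).Edge → ℂ) x.val‖ ^ 2‖ <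
            (ε / 2) ^ 2 := by
          by_contra hcon
          push_neg at hcon
          exact hv (by rw [hT]; exact (hc0ζ ((ε / 2) ^ 2) hδ2).mem_toFinset.mpr hcon)
        rw [Real.norm_of_nonneg (tsum_fiber_nonneg _ _ v)] at hsmall
        have hle : (∑' x : (E.fp F).fiber v,
            ‖((ζ : (E.fp F).Edge → ℂ) - fun x => if x ∈ F0 then (ζ : (E.fp F).Edge → ℂ) x
              else 0) x.val‖ ^ 2) ≤ ∑' x : (E.fp F).fiber v,
              ‖(ζ : (E.fp F).Edge → ℂ) x.val‖ ^ 2 := by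
          apply Summable.tsum_le_tsum _ (hDsum v) (hsumζ v)
          intro x
          rw [hptn v x]
          by_cases hx : x.val ∈ F0 <;> simp [hx, sq_norm_nonneg']
        linarith
    show normE (E.fp F) _ < ε
    rw [normE]
    have hsup : (⨆ v : V, Real.sqrt (∑' x : (E.fp F).fiber v,
        ‖((ζ : (E.fp F).Edge → ℂ) - fun x => if x ∈ F0 then (ζ : (E.fp F).Edge → ℂ) x else 0)
          x.val‖ ^ 2)) ≤ ε / 2 := by
      apply Real.iSup_le _ hδpos.le
      intro v
      calc Real.sqrt (∑' x : (E.fp F).fiber v,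
            ‖((ζ : (E.fp F).Edge → ℂ) - fun x => if x ∈ F0 then (ζ : (E.fp F).Edge → ℂ) x
              else 0) x.val‖ ^ 2) ≤ Real.sqrt ((ε / 2) ^ 2) := Real.sqrt_le_sqrt (hbV v)
        _ = ε / 2 := Real.sqrt_sq hδpos.le
    linarith

  · -- uniqueness
    intro Φ' hΦ'
    obtain ⟨h1, h2, -, -, -⟩ := hΦ'
    apply Submodule.linearMap_qext
    apply TensorProduct.ext'
    intro ξ η
    simp only [LinearMap.comp_apply, Submodule.mkQ_apply]
    apply Subtype.ext
    funext p
    obtain ⟨⟨e, f⟩, hcomp⟩ := p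
    have hchi := h1 e f hcomp
    have hip := congrFun (h2 (chiM E e) ξ (chiM F f) η) (F.s f)
    rw [hchi] at hip
    have hLHS : innerE (E.fp F) ((chiM (E.fp F) ⟨(e, f), hcomp⟩ : (E.fp F).Edge → ℂ))
        ((Φ' (Submodule.Quotient.mk (ξ ⊗ₜ[ℂ] η)) : (E.fp F).Edge → ℂ)) (F.s f) =
        (Φ' (Submodule.Quotient.mk (ξ ⊗ₜ[ℂ] η)) : (E.fp F).Edge → ℂ) ⟨(e, f), hcomp⟩ :=
      tsum_chi_mul (G := E.fp F) ⟨(e, f), hcomp⟩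
        (fun x => (Φ' (Submodule.Quotient.mk (ξ ⊗ₜ[ℂ] η)) : (E.fp F).Edge → ℂ) x.val)
    have hRHS : (∑' f' : F.fiber (F.s f),
        starRingEnd ℂ ((chiM F f : F.Edge → ℂ) f'.val) *
          innerE E (chiM E e : E.Edge → ℂ) (ξ : E.Edge → ℂ) (F.r f'.val) *
          (η : F.Edge → ℂ) f'.val) = (ξ : E.Edge → ℂ) e * (η : F.Edge → ℂ) f := by
      have step : ∀ f' : F.fiber (F.s f),
          starRingEnd ℂ ((chiM F f : F.Edge → ℂ) f'.val) *
            innerE E (chiM E e : E.Edge → ℂ) (ξ : E.Edge → ℂ) (F.r f'.val) *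
            (η : F.Edge → ℂ) f'.val =
          starRingEnd ℂ (chi F f f'.val) *
            (innerE E (chi E e) (ξ : E.Edge → ℂ) (F.r f'.val) * (η : F.Edge → ℂ) f'.val) :=
        fun f' => mul_assoc _ _ _
      rw [tsum_congr step]
      rw [tsum_chi_mul (G := F) f (fun f' : F.fiber (F.s f) =>
        innerE E (chi E e) (ξ : E.Edge → ℂ) (F.r f'.val) * (η : F.Edge → ℂ) f'.val)]
      have hin : innerE E (chi E e) (ξ : E.Edge → ℂ) (F.r f) = (ξ : E.Edge → ℂ) e := by
        rw [← hcomp]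
        exact tsum_chi_mul (G := E) e (fun x => (ξ : E.Edge → ℂ) x.val)
      rw [hin]
    have hval : (Φ' (Submodule.Quotient.mk (ξ ⊗ₜ[ℂ] η)) : (E.fp F).Edge → ℂ) ⟨(e, f), hcomp⟩ =
        (ξ : E.Edge → ℂ) e * (η : F.Edge → ℂ) f := by
      rw [← hLHS, hip]
      exact hRHS
    rw [hval]
    rfl
end

section
/- Let V be a locally compact Hausdorff space, E a topological graph with vertex space V, and suppose the topological graph correspondence X_E is a symmetric C₀(V)-imprimitivity bimodule (f·ξ = ξ·f for all f ∈ C₀(V), ξ ∈ X_E). Then r = s on E¹ and s : E¹ → V is a homeomorphism; consequently E is isomorphic, by a vertex-fixing isomorphism, to the trivial topological graph (V, V, id, id), and X_E is isomorphic to the trivial C₀(V)-correspondence. -/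
open ZeroAtInfty Filter Set

/-- The underlying set of the topological-graph correspondence X_E of a topological
graph with edge space `E1` and source map `s`: continuous functions ξ on the edge
space such that v ↦ Σ_{s(e)=v} |ξ(e)|² belongs to C₀(V). -/
def XTset {V E1 : Type} [TopologicalSpace V] [TopologicalSpace E1]
    (s : E1 → V) : Set (E1 → ℂ) :=
  {ξ | Continuous ξ ∧
    (∀ v, Summable fun e : {e : E1 // s e = v} => ‖ξ e.val‖ ^ 2) ∧
    Continuous (fun v => ∑' e : {e : E1 // s e = v}, ‖ξ e.val‖ ^ 2) ∧
    Filter.Tendsto (fun v => ∑' e : {e : E1 // s e = v}, ‖ξ e.val‖ ^ 2)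
      (Filter.cocompact V) (nhds 0)}

/-- The C₀(V)-valued inner product on X_E. -/
noncomputable def innerT {V E1 : Type} [TopologicalSpace V] [TopologicalSpace E1]
    (s : E1 → V) (ξ η : E1 → ℂ) : V → ℂ :=
  fun v => ∑' e : {e : E1 // s e = v}, starRingEnd ℂ (ξ e.val) * η e.val

/-- The norm of X_E. -/
noncomputable def normT {V E1 : Type} [TopologicalSpace V] [TopologicalSpace E1]
    (s : E1 → V) (ξ : E1 → ℂ) : ℝ :=
  ⨆ v : V, Real.sqrt (∑' e : {e : E1 // s e = v}, ‖ξ e.val‖ ^ 2)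

open scoped Classical in
private theorem bump_exists {V E1 : Type} [TopologicalSpace V] [TopologicalSpace E1]
    [T2Space V] [LocallyCompactSpace E1] [T2Space E1]
    {s : E1 → V} (hs : IsLocalHomeomorph s) (e₀ : E1) {W : Set E1}
    (hW : IsOpen W) (he₀ : e₀ ∈ W) :
    ∃ ξ ∈ XTset s, ξ e₀ = 1 ∧ (∀ e, ξ e ≠ 0 → e ∈ W) ∧
      (∀ e e', ξ e ≠ 0 → ξ e' ≠ 0 → s e = s e' → e = e') := by
  obtain ⟨φ, hmem, hfeq⟩ := hs e₀
  have hseq : ∀ e, s e = φ e := fun e => congrFun hfeq e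
  set U : Set E1 := φ.source ∩ W with hU
  have hUopen : IsOpen U := φ.open_source.inter hW
  obtain ⟨K, hKc, hKi, hKU⟩ := exists_compact_subset hUopen ⟨hmem, he₀⟩
  obtain ⟨g, hg1, hg0, hgc, hgI⟩ :=
    exists_continuous_one_zero_of_isCompact (isCompact_singleton (x := e₀))
      isOpen_interior.isClosed_compl
      (Set.disjoint_singleton_left.mpr (by simpa using hKi))
  set ξ : E1 → ℂ := fun e => (g e : ℂ) with hξ
  -- support facts
  have hsupp : ∀ e, ξ e ≠ 0 → e ∈ K := by
    intro e he
    by_contra hK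
    have : e ∈ (interior K)ᶜ := fun h => hK (interior_subset h)
    have := hg0 this
    simp only [Pi.zero_apply] at this
    exact he (by simp [hξ, this])
  have hsuppU : ∀ e, ξ e ≠ 0 → e ∈ U := fun e he => hKU (hsupp e he)
  have hinj : ∀ e e', ξ e ≠ 0 → ξ e' ≠ 0 → s e = s e' → e = e' := by
    intro e e' he he' hse
    exact φ.injOn (hsuppU e he).1 (hsuppU e' he').1 (by rw [← hseq, ← hseq]; exact hse)
  -- the fiber sum function
  set h : V → ℝ := fun v => if v ∈ φ.target then ‖ξ (φ.symm v)‖ ^ 2 else 0 with hh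
  have himg : IsCompact (s '' K) := hKc.image (hs.continuous)
  have hKsrc : K ⊆ φ.source := fun e he => (hKU he).1
  -- fiber elements with nonzero value
  have hfiber0 : ∀ v : V, v ∉ φ.target → ∀ e : {e : E1 // s e = v}, ξ e.val = 0 := by
    intro v hv e
    by_contra hne
    have heK : e.val ∈ K := hsupp _ hne
    have : φ e.val ∈ φ.target := φ.map_source (hKsrc heK)
    rw [← hseq, e.2] at this
    exact hv this
  have hsum : ∀ v, (∑' e : {e : E1 // s e = v}, ‖ξ e.val‖ ^ 2) = h v := by
    intro v
    by_cases hv : v ∈ φ.target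
    · have hsv : s (φ.symm v) = v := by rw [hseq]; exact φ.right_inv hv
      have := tsum_eq_single (L := SummationFilter.unconditional _) (f := fun e : {e : E1 // s e = v} => ‖ξ e.val‖ ^ 2)
        ⟨φ.symm v, hsv⟩ ?_
      · rw [this]; simp [hh, hv]
      · rintro ⟨e, he⟩ hne
        by_contra hne0
        have hξe : ξ e ≠ 0 := by
          intro h0; exact hne0 (by simp [h0])
        have heK : e ∈ K := hsupp _ hξe
        have : e = φ.symm v := by
          apply φ.injOn (hKsrc heK) (φ.map_target hv)
          rw [← hseq, he, ← hseq, hsv]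
        exact hne (Subtype.ext this)
    · have : (fun e : {e : E1 // s e = v} => ‖ξ e.val‖ ^ 2) = fun _ => 0 := by
        funext e; rw [hfiber0 v hv e]; simp
      rw [this, tsum_zero]
      simp [hh, hv]
  have hsummable : ∀ v, Summable fun e : {e : E1 // s e = v} => ‖ξ e.val‖ ^ 2 := by
    intro v
    by_cases hv : v ∈ φ.target
    · have hsv : s (φ.symm v) = v := by rw [hseq]; exact φ.right_inv hv
      apply summable_of_ne_finset_zero (s := {(⟨φ.symm v, hsv⟩ : {e : E1 // s e = v})})
      rintro ⟨e, he⟩ hne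
      simp only [Finset.mem_singleton] at hne
      by_contra hne0
      have hξe : ξ e ≠ 0 := fun h0 => hne0 (by simp [h0])
      have heK : e ∈ K := hsupp _ hξe
      have : e = φ.symm v := by
        apply φ.injOn (hKsrc heK) (φ.map_target hv)
        rw [← hseq, he, ← hseq, hsv]
      exact hne (Subtype.ext this)
    · have : (fun e : {e : E1 // s e = v} => ‖ξ e.val‖ ^ 2) = fun _ => 0 := by
        funext e; rw [hfiber0 v hv e]; simp
      rw [this]; exact summable_zero
  -- continuity of h
  have hzero_off : ∀ v, v ∉ s '' K → h v = 0 := by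
    intro v hv
    by_cases hvt : v ∈ φ.target
    · have : ξ (φ.symm v) = 0 := by
        by_contra hne
        have heK : φ.symm v ∈ K := hsupp _ hne
        exact hv ⟨φ.symm v, heK, by rw [hseq]; exact φ.right_inv hvt⟩
      simp [hh, hvt, this]
    · simp [hh, hvt]
  have hcont : Continuous h := by
    rw [continuous_iff_continuousAt]
    intro v
    by_cases hv : v ∈ φ.target
    · have : ContinuousOn h φ.target := by
        apply ContinuousOn.congr (f := fun v => ‖ξ (φ.symm v)‖ ^ 2)
        · exact ((continuous_norm.comp (Complex.continuous_ofReal.comp g.continuous)).pow 2).comp_continuousOn φ.continuousOn_symm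
        · intro w hw; simp [hh, hw]
      exact this.continuousAt (φ.open_target.mem_nhds hv)
    · have hvC : v ∈ (s '' K)ᶜ := by
        intro hmem'
        obtain ⟨e, heK, hev⟩ := hmem'
        have : φ e ∈ φ.target := φ.map_source (hKsrc heK)
        rw [← hseq, hev] at this
        exact hv this
      have : ContinuousOn h (s '' K)ᶜ := by
        apply ContinuousOn.congr (f := fun _ => (0:ℝ)) continuousOn_const
        intro w hw; exact hzero_off w hw
      exact this.continuousAt ((himg.isClosed.isOpen_compl).mem_nhds hvC)
  have htend : Tendsto h (cocompact V) (nhds 0) := by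
    have : h =ᶠ[cocompact V] (fun _ => (0:ℝ)) := by
      filter_upwards [mem_cocompact.mpr ⟨s '' K, himg, subset_rfl⟩] with v hv
      exact hzero_off v hv
    exact tendsto_const_nhds.congr' this.symm
  refine ⟨ξ, ⟨Complex.continuous_ofReal.comp g.continuous, hsummable, ?_, ?_⟩, ?_, ?_, hinj⟩
  · rw [show (fun v => ∑' e : {e : E1 // s e = v}, ‖ξ e.val‖ ^ 2) = h from funext hsum]
    exact hcont
  · rw [show (fun v => ∑' e : {e : E1 // s e = v}, ‖ξ e.val‖ ^ 2) = h from funext hsum]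
    exact htend
  · have := hg1 (Set.mem_singleton e₀); simp only [Pi.one_apply] at this
    simp [hξ, this]
  · intro e he; exact (hsuppU e he).2

/-- Let E = (V, E¹, r, s) be a topological graph whose correspondence
X_E is a symmetric C₀(V)-imprimitivity bimodule (symmetric: the left and right
actions coincide; imprimitivity: there is a full left C₀(V)-valued inner product L
compatible with the full right one, ⟨ξ,η⟩_L·ζ = ξ·⟨η,ζ⟩).  Then r = s, the source
map s is a homeomorphism E¹ ≅ V (so E is isomorphic to the trivial graph
(V, V, id, id) by a vertex-fixing isomorphism), and X_E is isomorphic to the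
trivial C₀(V)-correspondence C₀(V). -/
theorem stmt17 {V E1 : Type} [TopologicalSpace V] [TopologicalSpace E1]
    [LocallyCompactSpace V] [T2Space V] [LocallyCompactSpace E1] [T2Space E1]
    (r s : E1 → V) (hr : Continuous r) (hs : IsLocalHomeomorph s)
    (symm : ∀ f : C₀(V, ℂ), ∀ ξ ∈ XTset s, ∀ e : E1,
      f (r e) * ξ e = ξ e * f (s e))
    (L : (E1 → ℂ) → (E1 → ℂ) → V → ℂ)
    (hL_C0 : ∀ ξ ∈ XTset s, ∀ η ∈ XTset s, Continuous (L ξ η) ∧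
      Filter.Tendsto (L ξ η) (Filter.cocompact V) (nhds 0))
    (compat : ∀ ξ ∈ XTset s, ∀ η ∈ XTset s, ∀ ζ ∈ XTset s, ∀ e : E1,
      L ξ η (r e) * ζ e = ξ e * innerT s η ζ (s e))
    (full_right : ∀ v : V, ∃ ξ ∈ XTset s, innerT s ξ ξ v ≠ 0)
    (full_left : ∀ v : V, ∃ ξ ∈ XTset s, ∃ η ∈ XTset s, L ξ η v ≠ 0) :
    (∀ e, r e = s e) ∧ IsHomeomorph s ∧
    (∃ φ : E1 ≃ₜ V, ∀ e, r e = φ e ∧ s e = φ e) ∧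
    (∃ Φ : (Submodule.span ℂ (XTset s) : Submodule ℂ (E1 → ℂ)) ≃ₗ[ℂ] C₀(V, ℂ),
      (∀ ξ η : (Submodule.span ℂ (XTset s) : Submodule ℂ (E1 → ℂ)), ∀ v : V,
        innerT s (ξ : E1 → ℂ) (η : E1 → ℂ) v = starRingEnd ℂ (Φ ξ v) * Φ η v) ∧
      (∀ (f : C₀(V, ℂ)) (ξ ζ : (Submodule.span ℂ (XTset s) : Submodule ℂ (E1 → ℂ))),
        ((ζ : E1 → ℂ) = fun e => f (r e) * (ξ : E1 → ℂ) e) →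
          ∀ v, Φ ζ v = f v * Φ ξ v)) := by
  -- Step 1: r = s
  have hrs : ∀ e, r e = s e := by
    intro e
    by_contra hne
    obtain ⟨g, hg1, hg0, hgc, hgI⟩ :=
      exists_continuous_one_zero_of_isCompact (isCompact_singleton (x := r e))
        (isClosed_singleton (x := s e)) (by simpa using hne)
    have hzi : Tendsto (fun v => ((g v : ℂ))) (cocompact V) (nhds 0) := by
      have : (fun v => ((g v : ℂ))) =ᶠ[cocompact V] (fun _ => (0:ℂ)) := by
        filter_upwards [mem_cocompact.mpr ⟨tsupport g, hgc, subset_rfl⟩] with v hv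
        simp [image_eq_zero_of_notMem_tsupport hv]
      exact tendsto_const_nhds.congr' this.symm
    set f : C₀(V, ℂ) := ⟨⟨fun v => (g v : ℂ), Complex.continuous_ofReal.comp g.continuous⟩, hzi⟩
    obtain ⟨ξ, hξ, hξ1, -, -⟩ := bump_exists hs e isOpen_univ (mem_univ e)
    have hkey := symm f ξ hξ e
    have hfre : f (r e) = 1 := by
      show ((g (r e) : ℝ) : ℂ) = 1
      rw [show g (r e) = 1 from hg1 rfl]; norm_num
    have hfse : f (s e) = 0 := by
      show ((g (s e) : ℝ) : ℂ) = 0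
      rw [show g (s e) = 0 from hg0 rfl]; norm_num
    rw [hfre, hfse, hξ1] at hkey
    simp at hkey
  -- Step 2: s injective
  have hinj : Function.Injective s := by
    intro e1 e2 hse
    by_contra hne
    obtain ⟨ζ, hζ, hζ1, -, hζinj⟩ := bump_exists hs e2 isOpen_univ (mem_univ e2)
    obtain ⟨ζ', hζ', hζ'1, -, hζ'inj⟩ := bump_exists hs e1 isOpen_univ (mem_univ e1)
    obtain ⟨ξ, hξ, hξ1, hξsupp, -⟩ := bump_exists hs e1
      (isOpen_compl_singleton (x := e2)) (by simpa using hne)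
    have hξ2 : ξ e2 = 0 := by
      by_contra h0; exact (hξsupp e2 h0) rfl
    -- compat with ζ at e2 : L ξ ξ (r e2) = 0
    have h1 := compat ξ hξ ξ hξ ζ hζ e2
    rw [hζ1, mul_one, hξ2, zero_mul] at h1
    -- compat with ζ' at e1
    have h2 := compat ξ hξ ξ hξ ζ' hζ' e1
    rw [hζ'1, mul_one, hξ1, one_mul] at h2
    have hin : innerT s ξ ζ' (s e1) = 1 := by
      unfold innerT
      have := tsum_eq_single (L := SummationFilter.unconditional _)
        (f := fun e : {e : E1 // s e = s e1} => starRingEnd ℂ (ξ e.val) * ζ' e.val)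
        ⟨e1, rfl⟩ ?_
      · rw [this]; simp [hξ1, hζ'1]
      · rintro ⟨e, he⟩ hb
        by_contra h0
        have hζ'e : ζ' e ≠ 0 := by
          intro hz; exact h0 (by simp [hz])
        have : e = e1 := hζ'inj e e1 hζ'e (by rw [hζ'1]; exact one_ne_zero) he
        exact hb (Subtype.ext this)
    rw [hin] at h2
    rw [hrs e1, hse, ← hrs e2, h1] at h2
    exact one_ne_zero h2.symm
  -- Step 3: s surjective
  have hsurj : Function.Surjective s := by
    intro v
    by_contra hno
    push_neg at hno
    obtain ⟨ξ, hξ, hξv⟩ := full_right v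
    apply hξv
    unfold innerT
    have : IsEmpty {e : E1 // s e = v} := ⟨fun e => hno e.val e.2⟩
    exact tsum_empty
  have hbij : Function.Bijective s := ⟨hinj, hsurj⟩
  have hhom : IsHomeomorph s := ⟨hs.continuous, hs.isOpenMap, hbij⟩
  obtain ⟨φ, hφ⟩ := isHomeomorph_iff_exists_homeomorph.mp hhom
  have hφe : ∀ e, φ e = s e := fun e => congrFun hφ e
  have hφs : ∀ v, s (φ.symm v) = v := by
    intro v; rw [← hφe]; exact φ.apply_symm_apply v
  have hφsym : ∀ e, φ.symm (s e) = e := by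
    intro e; rw [← hφe]; exact φ.symm_apply_apply e
  -- unique fiber point
  have hfib : ∀ v (a : {e : E1 // s e = v}), a.val = φ.symm v := by
    rintro v ⟨e, he⟩
    exact hinj (by rw [hφs, he])
  -- tsum over fiber
  have htsumC : ∀ (F : E1 → ℂ) v,
      (∑' e : {e : E1 // s e = v}, F e.val) = F (φ.symm v) := by
    intro F v
    have := tsum_eq_single (L := SummationFilter.unconditional _) (f := fun e : {e : E1 // s e = v} => F e.val)
      ⟨φ.symm v, hφs v⟩ ?_
    · rw [this]
    · rintro ⟨e, he⟩ hb
      exact absurd (Subtype.ext (hfib v ⟨e, he⟩)) hb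
  have htsumR : ∀ (F : E1 → ℝ) v,
      (∑' e : {e : E1 // s e = v}, F e.val) = F (φ.symm v) := by
    intro F v
    have := tsum_eq_single (L := SummationFilter.unconditional _) (f := fun e : {e : E1 // s e = v} => F e.val)
      ⟨φ.symm v, hφs v⟩ ?_
    · rw [this]
    · rintro ⟨e, he⟩ hb
      exact absurd (Subtype.ext (hfib v ⟨e, he⟩)) hb
  -- characterization of XTset
  have hmem_iff : ∀ ξ : E1 → ℂ, ξ ∈ XTset s ↔
      Continuous ξ ∧ Tendsto (fun v => ξ (φ.symm v)) (cocompact V) (nhds 0) := by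
    intro ξ
    constructor
    · rintro ⟨hc, -, -, ht⟩
      refine ⟨hc, ?_⟩
      have ht' : Tendsto (fun v => ‖ξ (φ.symm v)‖ ^ 2) (cocompact V) (nhds 0) := by
        have : (fun v => ∑' e : {e : E1 // s e = v}, ‖ξ e.val‖ ^ 2)
            = fun v => ‖ξ (φ.symm v)‖ ^ 2 := by
          funext v; exact htsumR (fun e => ‖ξ e‖ ^ 2) v
        rwa [this] at ht
      rw [tendsto_zero_iff_norm_tendsto_zero]
      have hsq : Tendsto (fun v => Real.sqrt (‖ξ (φ.symm v)‖ ^ 2)) (cocompact V)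
          (nhds 0) := by
        have h2 := (Real.continuous_sqrt.tendsto 0).comp ht'
        rw [Real.sqrt_zero] at h2
        exact h2
      refine hsq.congr ?_
      intro v; exact Real.sqrt_sq (norm_nonneg _)
    · rintro ⟨hc, ht⟩
      have hcs : Continuous (fun v => ξ (φ.symm v)) := hc.comp φ.symm.continuous
      refine ⟨hc, ?_, ?_, ?_⟩
      · intro v
        apply summable_of_ne_finset_zero
          (s := {(⟨φ.symm v, hφs v⟩ : {e : E1 // s e = v})})
        rintro ⟨e, he⟩ hb
        simp only [Finset.mem_singleton] at hb
        exact absurd (Subtype.ext (hfib v ⟨e, he⟩)) hb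
      · have : (fun v => ∑' e : {e : E1 // s e = v}, ‖ξ e.val‖ ^ 2)
            = fun v => ‖ξ (φ.symm v)‖ ^ 2 := by
          funext v; exact htsumR (fun e => ‖ξ e‖ ^ 2) v
        rw [this]
        exact (continuous_norm.comp hcs).pow 2
      · have heq : (fun v => ∑' e : {e : E1 // s e = v}, ‖ξ e.val‖ ^ 2)
            = fun v => ‖ξ (φ.symm v)‖ ^ 2 := by
          funext v; exact htsumR (fun e => ‖ξ e‖ ^ 2) v
        rw [heq]
        have := (ht.norm).pow 2
        simpa using this
  -- XTset is a submodule
  set M : Submodule ℂ (E1 → ℂ) :=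
    { carrier := XTset s
      add_mem' := by
        intro a b ha hb
        rw [hmem_iff] at ha hb ⊢
        refine ⟨ha.1.add hb.1, ?_⟩
        have := ha.2.add hb.2
        simpa using this
      zero_mem' := by
        rw [hmem_iff]
        exact ⟨continuous_const, by simpa using tendsto_const_nhds⟩
      smul_mem' := by
        intro c a ha
        rw [hmem_iff] at ha ⊢
        refine ⟨continuous_const.mul ha.1, ?_⟩
        have := ha.2.const_mul c
        simpa using this } with hM
  have hspan : Submodule.span ℂ (XTset s) = M := Submodule.span_eq M
  have hmemM : ∀ ξ : E1 → ℂ, ξ ∈ Submodule.span ℂ (XTset s) → ξ ∈ XTset s := by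
    intro ξ hξ; rw [hspan] at hξ; exact hξ
  refine ⟨hrs, hhom, ⟨φ, fun e => ⟨by rw [hrs, hφe], (hφe e).symm⟩⟩, ?_⟩
  -- the linear equivalence
  have memC0 : ∀ ξ : (Submodule.span ℂ (XTset s) : Submodule ℂ (E1 → ℂ)),
      Continuous (fun v => (ξ : E1 → ℂ) (φ.symm v)) ∧
      Tendsto (fun v => (ξ : E1 → ℂ) (φ.symm v)) (cocompact V) (nhds 0) := by
    intro ξ
    have h := (hmem_iff _).mp (hmemM _ ξ.2)
    exact ⟨h.1.comp φ.symm.continuous, h.2⟩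
  have memSpan : ∀ f : C₀(V, ℂ), (fun e => f (s e)) ∈ Submodule.span ℂ (XTset s) := by
    intro f
    apply Submodule.subset_span
    rw [hmem_iff]
    refine ⟨f.continuous.comp hs.continuous, ?_⟩
    have : (fun v => f (s (φ.symm v))) = fun v => f v := by
      funext v; rw [hφs]
    rw [this]
    exact zero_at_infty f
  refine ⟨⟨⟨⟨fun ξ => ⟨⟨fun v => (ξ : E1 → ℂ) (φ.symm v), (memC0 ξ).1⟩, (memC0 ξ).2⟩,
      fun a b => by ext v; rfl⟩,
      fun c a => by ext v; rfl⟩,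
      fun f => ⟨fun e => f (s e), memSpan f⟩,
      fun ξ => by
        apply Subtype.ext
        funext e
        show (↑ξ : E1 → ℂ) (φ.symm (s e)) = (↑ξ : E1 → ℂ) e
        rw [hφsym],
      fun f => by
        ext v
        show f (s (φ.symm v)) = f v
        rw [hφs]⟩, ?_, ?_⟩
  · intro ξ η v
    exact htsumC (fun e => starRingEnd ℂ ((ξ : E1 → ℂ) e) * (η : E1 → ℂ) e) v
  · intro f ξ ζ hζ v
    show (ζ : E1 → ℂ) (φ.symm v) = f v * (ξ : E1 → ℂ) (φ.symm v)
    rw [hζ]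
    simp only []
    rw [hrs, hφs]
end
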